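/- Integration-by-parts revenue bound (key step in the optimal-mechanism characterization): Let a < b be reals, let h : [a, b] → ℝ be continuously differentiable, nondecreasing, and satisfy h(b) = 0, let c : [a, b] → ℝ be continuously differentiable, let u ∈ ℝ, and let G : [a, b] → ℝ be continuously differentiable with G(a) = 0 and G(θ) ≥ c(θ) − u for all θ ∈ [a, b]. Then ∫_a^b h(θ)·G'(θ) dθ ≤ h(a)·(c(a) − u) + ∫_a^b h(θ)·c'(θ) dθ. -/
import Mathlib


open MeasureTheory intervalIntegral Set

/-- Integration-by-parts revenue bound: for a nondecreasing continuously
differentiable `h` vanishing at `b`, a continuously differentiable `c`, and a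
continuously differentiable `G` with `G a = 0` satisfying the pointwise
constraint `G ≥ c − u`, the integral `∫ h·G'` is at most
`h a·(c a − u) + ∫ h·c'`. -/
theorem integration_by_parts_revenue_bound
    (a b : ℝ) (hab : a < b)
    (h h' c c' G G' : ℝ → ℝ) (u : ℝ)
    (hh : ∀ θ ∈ Icc a b, HasDerivWithinAt h (h' θ) (Icc a b) θ)
    (hh'cont : ContinuousOn h' (Icc a b))
    (hhmono : MonotoneOn h (Icc a b))
    (hhb : h b = 0)
    (hc : ∀ θ ∈ Icc a b, HasDerivWithinAt c (c' θ) (Icc a b) θ)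
    (hc'cont : ContinuousOn c' (Icc a b))
    (hG : ∀ θ ∈ Icc a b, HasDerivWithinAt G (G' θ) (Icc a b) θ)
    (hG'cont : ContinuousOn G' (Icc a b))
    (hGa : G a = 0)
    (hGc : ∀ θ ∈ Icc a b, c θ - u ≤ G θ) :
    (∫ θ in a..b, h θ * G' θ)
      ≤ h a * (c a - u) + (∫ θ in a..b, h θ * c' θ) := by
  have hab' : a ≤ b := hab.le
  have huIcc : uIcc a b = Icc a b := uIcc_of_le hab'
  -- h' is nonnegative on [a,b]
  have hh'nonneg : ∀ θ ∈ Icc a b, 0 ≤ h' θ := by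
    intro θ hθ
    have hslope : Filter.Tendsto (slope h θ) (nhdsWithin θ (Icc a b \ {θ})) (nhds (h' θ)) :=
      (hasDerivWithinAt_iff_tendsto_slope).mp (hh θ hθ)
    rcases lt_or_eq_of_le hθ.2 with hlt | heq
    · -- θ < b : use right slopes
      have hsub : Ioo θ b ⊆ Icc a b \ {θ} := by
        intro x hx
        exact ⟨⟨le_trans hθ.1 hx.1.le, hx.2.le⟩, ne_of_gt hx.1⟩
      have hne : (nhdsWithin θ (Ioo θ b)).NeBot := left_nhdsWithin_Ioo_neBot hlt
      have hT : Filter.Tendsto (slope h θ) (nhdsWithin θ (Ioo θ b)) (nhds (h' θ)) :=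
        hslope.mono_left (nhdsWithin_mono θ hsub)
      refine ge_of_tendsto hT ?_
      filter_upwards [self_mem_nhdsWithin] with x hx
      have hx' : x ∈ Icc a b := ⟨le_trans hθ.1 hx.1.le, hx.2.le⟩
      have : h θ ≤ h x := hhmono hθ hx' hx.1.le
      rw [slope_def_field]
      exact div_nonneg (by linarith) (by linarith [hx.1])
    · -- θ = b : use left slopes
      subst heq
      have hsub : Ioo a θ ⊆ Icc a θ \ {θ} := by
        intro x hx
        exact ⟨⟨hx.1.le, hx.2.le⟩, ne_of_lt hx.2⟩
      have hab2 : a < θ := hab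
      have hne : (nhdsWithin θ (Ioo a θ)).NeBot := right_nhdsWithin_Ioo_neBot hab2
      have hT : Filter.Tendsto (slope h θ) (nhdsWithin θ (Ioo a θ)) (nhds (h' θ)) :=
        hslope.mono_left (nhdsWithin_mono θ (by simpa [hθ.2] using hsub))
      refine ge_of_tendsto hT ?_
      filter_upwards [self_mem_nhdsWithin] with x hx
      have hx' : x ∈ Icc a θ := ⟨hx.1.le, hx.2.le⟩
      have : h x ≤ h θ := hhmono hx' hθ hx.2.le
      rw [slope_def_field]
      exact div_nonneg_of_nonpos (by linarith) (by linarith [hx.2])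
  -- define v = G - (c - u)
  set v : ℝ → ℝ := fun θ => G θ - (c θ - u) with hv_def
  set v' : ℝ → ℝ := fun θ => G' θ - c' θ with hv'_def
  have hcontv' : ContinuousOn v' (Icc a b) := hG'cont.sub hc'cont
  have hvderiv : ∀ x ∈ uIcc a b, HasDerivWithinAt v (v' x) (uIcc a b) x := by
    rw [huIcc]; intro x hx
    exact ((hG x hx).sub ((hc x hx).sub_const u))
  have hhderiv : ∀ x ∈ uIcc a b, HasDerivWithinAt h (h' x) (uIcc a b) x := by
    rw [huIcc]; exact hh
  have hh'int : IntervalIntegrable h' volume a b := by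
    rw [intervalIntegrable_iff_integrableOn_Icc_of_le hab']
    exact hh'cont.integrableOn_Icc
  have hv'int : IntervalIntegrable v' volume a b := by
    rw [intervalIntegrable_iff_integrableOn_Icc_of_le hab']
    exact hcontv'.integrableOn_Icc
  have hIBP := intervalIntegral.integral_mul_deriv_eq_deriv_mul_of_hasDerivWithinAt
    hhderiv hvderiv hh'int hv'int
  -- integrability of the pieces h*G', h*c'
  have hhcont : ContinuousOn h (Icc a b) := fun x hx => (hh x hx).continuousWithinAt
  have hint1 : IntervalIntegrable (fun θ => h θ * G' θ) volume a b := by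
    rw [intervalIntegrable_iff_integrableOn_Icc_of_le hab']
    exact (hhcont.mul hG'cont).integrableOn_Icc
  have hint2 : IntervalIntegrable (fun θ => h θ * c' θ) volume a b := by
    rw [intervalIntegrable_iff_integrableOn_Icc_of_le hab']
    exact (hhcont.mul hc'cont).integrableOn_Icc
  have hsplit : (∫ x in a..b, h x * v' x)
      = (∫ θ in a..b, h θ * G' θ) - (∫ θ in a..b, h θ * c' θ) := by
    rw [← intervalIntegral.integral_sub hint1 hint2]
    apply intervalIntegral.integral_congr
    intro x _
    simp [hv'_def, mul_sub]
  -- nonnegativity of ∫ h' * v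
  have hnonneg : 0 ≤ ∫ x in a..b, h' x * v x := by
    apply intervalIntegral.integral_nonneg hab'
    intro x hx
    exact mul_nonneg (hh'nonneg x hx) (by simpa [hv_def] using hGc x hx)
  have hvb : h b * v b = 0 := by rw [hhb]; ring
  have hva : v a = -(c a - u) := by simp [hv_def, hGa]
  rw [hsplit, hvb, hva] at hIBP
  linarith [hIBP, hnonneg]
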